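/- Let M be a Z_p-module and f ∈ End(M) nilpotent with f^d = 0, d < p. Then log(exp(f)) = f, where exp(f) = Σ_{k=0}^{p-1} f^k/k! and log(g) = Σ_{k=1}^{p-1} (-1)^{k+1}(g - id)^k/k. Hence truncated exp and log are mutually inverse bijections between nilpotent endomorphisms of index < p and automorphisms g with (g-id) nilpotent of index < p. -/

import Mathlib

set_option maxRecDepth 8000


/-- Truncated exponential `∑_{k<p} f^k/k!` of an endomorphism of a `ℤ_[p]`-module. -/
noncomputable def texp (p : ℕ) [Fact p.Prime] {M : Type*} [AddCommGroup M] [Module ℤ_[p] M]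
    (f : Module.End ℤ_[p] M) : Module.End ℤ_[p] M :=
  ∑ k ∈ Finset.range p, Ring.inverse ((k.factorial : ℤ_[p])) • f ^ k

/-- Truncated logarithm `∑_{1≤k≤p-1} (-1)^{k+1}(g-1)^k/k`. -/
noncomputable def tlog (p : ℕ) [Fact p.Prime] {M : Type*} [AddCommGroup M] [Module ℤ_[p] M]
    (g : Module.End ℤ_[p] M) : Module.End ℤ_[p] M :=
  ∑ k ∈ Finset.Icc 1 (p - 1), ((-1 : ℤ_[p]) ^ (k + 1) * Ring.inverse ((k : ℤ_[p]))) • (g - 1) ^ k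


open Polynomial Finset

namespace Stmt4Aux

variable {p : ℕ} [hp : Fact p.Prime]

lemma isUnit_natCast {n : ℕ} (h : ¬ p ∣ n) : IsUnit (n : ℤ_[p]) := by
  by_contra hc
  rw [PadicInt.not_isUnit_iff] at hc
  have he : ((n : ℤ) : ℤ_[p]) = (n : ℤ_[p]) := by push_cast; ring
  rw [← he, PadicInt.norm_int_lt_one_iff_dvd] at hc
  exact h (by exact_mod_cast hc)

lemma isUnit_of_lt {k : ℕ} (h0 : 0 < k) (h : k < p) : IsUnit (k : ℤ_[p]) :=
  isUnit_natCast (fun hd => absurd (Nat.le_of_dvd h0 hd) (not_le.2 h))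

lemma isUnit_factorial {k : ℕ} (h : k < p) : IsUnit ((k.factorial : ℤ_[p])) := by
  induction k with
  | zero => simp
  | succ n ih =>
    rw [Nat.factorial_succ, Nat.cast_mul]
    exact (isUnit_of_lt n.succ_pos h).mul (ih ((Nat.lt_succ_self n).trans h))

/-- `aeval` of a composition, valid in noncommutative algebras. -/
lemma aeval_comp' {A : Type*} [Ring A] [Algebra ℤ_[p] A] (x : A) (P Q : ℤ_[p][X]) :
    aeval x (P.comp Q) = aeval (aeval x Q) P := by
  induction P using Polynomial.induction_on' with
  | add f g hf hg => rw [add_comp, map_add, map_add, hf, hg]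
  | monomial n a =>
    rw [monomial_comp, aeval_monomial, map_mul, map_pow, aeval_C]

variable (p)

/-- Truncated exponential polynomial. -/
noncomputable def Ep : ℤ_[p][X] :=
  ∑ k ∈ range p, C (Ring.inverse ((k.factorial : ℤ_[p]))) * X ^ k

/-- Truncated logarithm polynomial (in `Y = g - 1`). -/
noncomputable def Lp : ℤ_[p][X] :=
  ∑ k ∈ Icc 1 (p - 1), C ((-1 : ℤ_[p]) ^ (k + 1) * Ring.inverse ((k : ℤ_[p]))) * X ^ k

variable {p}

lemma pos_p : 0 < p := hp.out.pos

lemma Ep_coeff_zero : (Ep p).coeff 0 = 1 := by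
  rw [Ep, finset_sum_coeff]
  rw [Finset.sum_eq_single 0]
  · simp
  · intro b _ hb
    simp [coeff_X_pow, (Ne.symm hb)]
  · intro h
    exact absurd (Finset.mem_range.2 pos_p) h

lemma Lp_coeff_zero : (Lp p).coeff 0 = 0 := by
  rw [Lp, finset_sum_coeff]
  refine Finset.sum_eq_zero fun k hk => ?_
  have hk1 : 1 ≤ k := (Finset.mem_Icc.1 hk).1
  simp [coeff_X_pow, (Nat.one_le_iff_ne_zero.1 hk1).symm]

lemma X_dvd_Ep_sub_one : (X : ℤ_[p][X]) ∣ Ep p - 1 := by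
  rw [X_dvd_iff, coeff_sub, Ep_coeff_zero]
  simp

lemma X_dvd_Lp : (X : ℤ_[p][X]) ∣ Lp p := by
  rw [X_dvd_iff]; exact Lp_coeff_zero

lemma inv_fact_succ {j : ℕ} (h : j + 1 < p) :
    Ring.inverse ((((j+1).factorial : ℕ) : ℤ_[p])) * (((j+1 : ℕ) : ℕ) : ℤ_[p])
      = Ring.inverse ((j.factorial : ℤ_[p])) := by
  have hu1 : IsUnit (((j+1 : ℕ) : ℕ) : ℤ_[p]) := isUnit_of_lt (Nat.succ_pos j) h
  have hfact : (((j+1).factorial : ℕ) : ℤ_[p])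
      = ((j.factorial : ℕ) : ℤ_[p]) * (((j+1 : ℕ) : ℕ) : ℤ_[p]) := by
    rw [Nat.factorial_succ]; push_cast; ring
  rw [hfact, Ring.mul_inverse_rev, mul_assoc, mul_left_comm,
    Ring.inverse_mul_cancel _ hu1, mul_one]

lemma derivative_Ep : derivative (Ep p)
    = ∑ j ∈ range (p - 1), C (Ring.inverse ((j.factorial : ℤ_[p]))) * X ^ j := by
  rw [Ep, derivative_sum]
  have h1 : ∀ k ∈ range p, derivative (C (Ring.inverse ((k.factorial : ℤ_[p]))) * X ^ k)
      = C (Ring.inverse ((k.factorial : ℤ_[p])) * (k : ℤ_[p])) * X ^ (k-1) :=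
    fun k _ => derivative_C_mul_X_pow _ _
  rw [Finset.sum_congr rfl h1, Finset.range_eq_Ico, Finset.sum_eq_sum_Ico_succ_bot pos_p,
    Finset.sum_Ico_eq_sum_range]
  simp only [Nat.cast_zero, mul_zero, map_zero, zero_mul, zero_add]
  refine Finset.sum_congr (by simp) fun i hi => ?_
  have hi' : i < p - 1 := by simpa using hi
  have h2 : 1 + i = i + 1 := Nat.add_comm 1 i
  rw [h2, inv_fact_succ (by omega), Nat.add_sub_cancel]

lemma Ep_eq : Ep p = (∑ j ∈ range (p-1), C (Ring.inverse ((j.factorial : ℤ_[p]))) * X ^ j)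
    + C (Ring.inverse (((p-1).factorial : ℤ_[p]))) * X ^ (p-1) := by
  have h : range p = range ((p-1)+1) := by have h0 := pos_p (p := p); congr 1; omega
  rw [Ep, h, Finset.sum_range_succ]

lemma derivative_Ep' : derivative (Ep p)
    = Ep p - C (Ring.inverse (((p-1).factorial : ℤ_[p]))) * X ^ (p-1) := by
  rw [derivative_Ep]
  conv_rhs => rw [Ep_eq]
  ring

lemma derivative_Lp : derivative (Lp p) = ∑ j ∈ range (p - 1), (-X : ℤ_[p][X]) ^ j := by
  rw [Lp, derivative_sum]
  have h1 : ∀ k ∈ Icc 1 (p-1),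
      derivative (C ((-1 : ℤ_[p]) ^ (k + 1) * Ring.inverse ((k : ℤ_[p]))) * X ^ k)
      = C ((-1 : ℤ_[p]) ^ (k + 1) * Ring.inverse ((k : ℤ_[p])) * (k : ℤ_[p])) * X ^ (k-1) :=
    fun k _ => derivative_C_mul_X_pow _ _
  rw [Finset.sum_congr rfl h1, ← Finset.Ico_add_one_right_eq_Icc, Finset.sum_Ico_eq_sum_range]
  refine Finset.sum_congr (by simp) fun i hi => ?_
  have hi' : i < p - 1 + 1 - 1 := by simpa using hi
  have hu : IsUnit ((1 + i : ℕ) : ℤ_[p]) := isUnit_of_lt (by omega) (by omega)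
  have h3 : (-1 : ℤ_[p]) ^ (1 + i + 1) * Ring.inverse (((1 + i : ℕ)) : ℤ_[p])
      * (((1 + i : ℕ)) : ℤ_[p]) = (-1 : ℤ_[p]) ^ i := by
    rw [mul_assoc, Ring.inverse_mul_cancel _ hu, mul_one,
      show 1 + i + 1 = i + 2 from by omega, pow_add]
    simp
  rw [h3, Nat.add_sub_cancel_left]
  have h4 : (C ((-1 : ℤ_[p]) ^ i) : ℤ_[p][X]) = (-1) ^ i := by rw [map_pow, map_neg, map_one]
  rw [h4, neg_pow (X : ℤ_[p][X]) i]

lemma one_add_X_mul_derivative_Lp :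
    (1 + X) * derivative (Lp p) = 1 - (-X : ℤ_[p][X]) ^ (p-1) := by
  rw [derivative_Lp]
  linear_combination -(geom_sum_mul (-X : ℤ_[p][X]) (p-1))

lemma X_pow_dvd_of_derivative {P : ℤ_[p][X]} {n : ℕ} (hn : n ≤ p - 1)
    (hd : (X : ℤ_[p][X]) ^ n ∣ derivative P) (h0 : P.coeff 0 = 0) :
    (X : ℤ_[p][X]) ^ n ∣ P := by
  have hpp := pos_p (p := p)
  rw [X_pow_dvd_iff] at hd ⊢
  intro i hi
  cases i with
  | zero => exact h0
  | succ j =>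
    have hj : (derivative P).coeff j = 0 := hd j (by omega)
    rw [coeff_derivative] at hj
    have hu : IsUnit ((j + 1 : ℕ) : ℤ_[p]) := isUnit_of_lt (Nat.succ_pos j) (by omega)
    have hj' : P.coeff (j + 1) * ((j + 1 : ℕ) : ℤ_[p]) = 0 := by push_cast; exact_mod_cast hj
    exact hu.mul_left_eq_zero.mp hj'

lemma X_pow_dvd_of_rec {P : ℤ_[p][X]} {n : ℕ} (hn : n ≤ p - 1)
    (hd : (X : ℤ_[p][X]) ^ n ∣ ((1 + X) * derivative P - P)) (h0 : P.coeff 0 = 0) :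
    (X : ℤ_[p][X]) ^ n ∣ P := by
  have hpp := pos_p (p := p)
  rw [X_pow_dvd_iff] at hd ⊢
  suffices h : ∀ i, i ≤ n → P.coeff i = 0 by intro i hi; exact h i hi.le
  intro i
  induction i with
  | zero => intro _; exact h0
  | succ j ih =>
    intro hjn
    have hj : P.coeff j = 0 := ih (by omega)
    have hc := hd j (by omega)
    rw [coeff_sub, add_mul, one_mul, coeff_add] at hc
    have hXP : (X * derivative P).coeff j = 0 := by
      cases j with
      | zero => rw [mul_coeff_zero, coeff_X_zero, zero_mul]
      | succ m =>
        rw [coeff_X_mul, coeff_derivative, show P.coeff (m + 1) = 0 from hj, zero_mul]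
    rw [hXP, add_zero] at hc
    have hc' : (derivative P).coeff j = 0 := by rw [hj, sub_zero] at hc; exact hc
    rw [coeff_derivative] at hc'
    have hu : IsUnit ((j + 1 : ℕ) : ℤ_[p]) := isUnit_of_lt (Nat.succ_pos j) (by omega)
    have hj' : P.coeff (j + 1) * ((j + 1 : ℕ) : ℤ_[p]) = 0 := by push_cast; exact_mod_cast hc'
    exact hu.mul_left_eq_zero.mp hj'

lemma key1 : (X : ℤ_[p][X]) ^ (p - 1) ∣ (Lp p).comp (Ep p - 1) - X := by
  set W : ℤ_[p][X] := Ep p - 1 with hW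
  set F : ℤ_[p][X] := (Lp p).comp W - X with hF
  obtain ⟨V, hV⟩ := X_dvd_Ep_sub_one (p := p)
  have hdF : derivative F = (derivative (Lp p)).comp W * derivative (Ep p) - 1 := by
    rw [hF, derivative_sub, derivative_comp, derivative_X, hW, derivative_sub,
      derivative_one, sub_zero]
    ring
  have hgeom : Ep p * ((derivative (Lp p)).comp W) = 1 - (-W) ^ (p - 1) := by
    have h := congrArg (fun q => q.comp W) (one_add_X_mul_derivative_Lp (p := p))
    simp only [mul_comp, add_comp, one_comp, X_comp, sub_comp, pow_comp, neg_comp] at h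
    rw [← h, hW]; ring
  have hEF : Ep p * derivative F
      = -(C (Ring.inverse (((p-1).factorial : ℤ_[p]))) * X ^ (p-1))
        - (-W) ^ (p-1) * derivative (Ep p) := by
    rw [hdF]
    calc Ep p * ((derivative (Lp p)).comp W * derivative (Ep p) - 1)
        = (Ep p * ((derivative (Lp p)).comp W)) * derivative (Ep p) - Ep p := by ring
      _ = (1 - (-W) ^ (p-1)) * derivative (Ep p) - Ep p := by rw [hgeom]
      _ = (derivative (Ep p) - Ep p) - (-W) ^ (p-1) * derivative (Ep p) := by ring
      _ = _ := by rw [derivative_Ep']; ring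
  have hdvd1 : (X : ℤ_[p][X]) ^ (p-1) ∣ Ep p * derivative F := by
    rw [hEF]
    refine dvd_sub (dvd_neg.mpr (dvd_mul_left _ _))
      ((pow_dvd_pow_of_dvd (dvd_neg.mpr X_dvd_Ep_sub_one) _).mul_right _)
  have hcop : IsCoprime ((X : ℤ_[p][X]) ^ (p-1)) (Ep p) :=
    IsCoprime.pow_left ⟨-V, 1, by rw [one_mul]; linear_combination hV⟩
  have hdvdF' : (X : ℤ_[p][X]) ^ (p-1) ∣ derivative F := hcop.dvd_of_dvd_mul_left hdvd1
  refine X_pow_dvd_of_derivative le_rfl hdvdF' ?_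
  have hW0 : W.eval 0 = 0 := by
    rw [← coeff_zero_eq_eval_zero, hW, coeff_sub, Ep_coeff_zero]; simp
  rw [hF, coeff_sub, coeff_X_zero, sub_zero, coeff_zero_eq_eval_zero, eval_comp, hW0,
    ← coeff_zero_eq_eval_zero, Lp_coeff_zero]

lemma key2 : (X : ℤ_[p][X]) ^ (p - 1) ∣ (Ep p).comp (Lp p) - (X + 1) := by
  set c : ℤ_[p] := Ring.inverse (((p-1).factorial : ℤ_[p])) with hc
  set G : ℤ_[p][X] := (Ep p).comp (Lp p) - (X + 1) with hG
  have hdG : derivative G = (derivative (Ep p)).comp (Lp p) * derivative (Lp p) - 1 := by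
    rw [hG, derivative_sub, derivative_comp, derivative_add, derivative_X, derivative_one,
      add_zero]
    ring
  have hE'L : (derivative (Ep p)).comp (Lp p)
      = (G + X + 1) - C c * (Lp p) ^ (p-1) := by
    rw [derivative_Ep', sub_comp, mul_comp, C_comp, pow_comp, X_comp, hG]; ring
  have hmain : (1 + X) * derivative G - G
      = -(C c * (Lp p) ^ (p-1)) - ((G + X + 1) - C c * (Lp p) ^ (p-1)) * (-X) ^ (p-1) := by
    rw [hdG, hE'L]
    calc (1 + X) * (((G + X + 1) - C c * (Lp p) ^ (p-1)) * derivative (Lp p) - 1) - G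
        = ((G + X + 1) - C c * (Lp p) ^ (p-1)) * ((1 + X) * derivative (Lp p))
          - (1 + X) - G := by ring
      _ = ((G + X + 1) - C c * (Lp p) ^ (p-1)) * (1 - (-X) ^ (p-1)) - (1 + X) - G := by
          rw [one_add_X_mul_derivative_Lp]
      _ = _ := by ring
  refine X_pow_dvd_of_rec le_rfl ?_ ?_
  · rw [hmain]
    exact dvd_sub (dvd_neg.mpr ((pow_dvd_pow_of_dvd X_dvd_Lp _).mul_left _))
      ((pow_dvd_pow_of_dvd (dvd_neg.mpr dvd_rfl) _).mul_left _)
  · have hL0 : (Lp p).eval 0 = 0 := by rw [← coeff_zero_eq_eval_zero]; exact Lp_coeff_zero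
    rw [hG, coeff_sub, coeff_add, coeff_X_zero, coeff_zero_eq_eval_zero, eval_comp, hL0,
      ← coeff_zero_eq_eval_zero, Ep_coeff_zero]
    simp

variable {M : Type*} [AddCommGroup M] [Module ℤ_[p] M]

lemma texp_eq (f : Module.End ℤ_[p] M) : texp p f = aeval f (Ep p) := by
  rw [texp, Ep, map_sum]
  refine Finset.sum_congr rfl fun k _ => ?_
  rw [map_mul, aeval_C, map_pow, aeval_X, Algebra.smul_def]

lemma tlog_eq (g : Module.End ℤ_[p] M) : tlog p g = aeval (g - 1) (Lp p) := by
  rw [tlog, Lp, map_sum]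
  refine Finset.sum_congr rfl fun k _ => ?_
  rw [map_mul, aeval_C, map_pow, aeval_X, Algebra.smul_def]

lemma texp_sub_one_eq (f : Module.End ℤ_[p] M) : texp p f - 1 = aeval f (Ep p - 1) := by
  rw [map_sub, map_one, texp_eq]

lemma tlog_texp {f : Module.End ℤ_[p] M} (hf : f ^ (p - 1) = 0) : tlog p (texp p f) = f := by
  rw [tlog_eq, texp_sub_one_eq, ← aeval_comp']
  obtain ⟨R, hR⟩ := key1 (p := p)
  have h : (Lp p).comp (Ep p - 1) = X + X ^ (p - 1) * R := by linear_combination hR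
  rw [h, map_add, map_mul, map_pow, aeval_X, hf, zero_mul, add_zero]

lemma texp_tlog {g : Module.End ℤ_[p] M} (hg : (g - 1) ^ (p - 1) = 0) :
    texp p (tlog p g) = g := by
  rw [texp_eq, tlog_eq, ← aeval_comp']
  obtain ⟨R, hR⟩ := key2 (p := p)
  have h : (Ep p).comp (Lp p) = (X + 1) + X ^ (p - 1) * R := by linear_combination hR
  rw [h, map_add, map_add, map_mul, map_pow, aeval_X, map_one, hg, zero_mul, add_zero]
  abel

lemma texp_mem {f : Module.End ℤ_[p] M} (hf : f ^ (p - 1) = 0) :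
    (texp p f - 1) ^ (p - 1) = 0 := by
  obtain ⟨V, hV⟩ := X_dvd_Ep_sub_one (p := p)
  rw [texp_sub_one_eq, hV, ← map_pow, mul_pow, map_mul, map_pow, aeval_X, hf, zero_mul]

lemma tlog_mem {g : Module.End ℤ_[p] M} (hg : (g - 1) ^ (p - 1) = 0) :
    (tlog p g) ^ (p - 1) = 0 := by
  obtain ⟨V, hV⟩ := X_dvd_Lp (p := p)
  rw [tlog_eq, hV, ← map_pow, mul_pow, map_mul, map_pow, aeval_X, hg, zero_mul]

end Stmt4Aux

open Stmt4Aux in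
theorem stmt4 {p : ℕ} [Fact p.Prime] {M : Type*} [AddCommGroup M] [Module ℤ_[p] M]
    (f : Module.End ℤ_[p] M) (d : ℕ) (hd : d < p) (hf : f ^ d = 0) :
    tlog p (texp p f) = f ∧
    Set.BijOn (texp p) {h : Module.End ℤ_[p] M | h ^ (p - 1) = 0}
      {g : Module.End ℤ_[p] M | (g - 1) ^ (p - 1) = 0} ∧
    Set.BijOn (tlog p) {g : Module.End ℤ_[p] M | (g - 1) ^ (p - 1) = 0}
      {h : Module.End ℤ_[p] M | h ^ (p - 1) = 0} ∧
    Set.InvOn (tlog p) (texp p) {h : Module.End ℤ_[p] M | h ^ (p - 1) = 0}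
      {g : Module.End ℤ_[p] M | (g - 1) ^ (p - 1) = 0} := by
  have hf' : f ^ (p - 1) = 0 := by
    have h : f ^ (p - 1) = f ^ d * f ^ (p - 1 - d) := by rw [← pow_add]; congr 1; omega
    rw [h, hf, zero_mul]
  have hinv : Set.InvOn (tlog p) (texp p) {h : Module.End ℤ_[p] M | h ^ (p - 1) = 0}
      {g : Module.End ℤ_[p] M | (g - 1) ^ (p - 1) = 0} :=
    ⟨fun x hx => tlog_texp hx, fun y hy => texp_tlog hy⟩
  have hmap1 : Set.MapsTo (texp p) {h : Module.End ℤ_[p] M | h ^ (p - 1) = 0}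
      {g : Module.End ℤ_[p] M | (g - 1) ^ (p - 1) = 0} := fun x hx => texp_mem hx
  have hmap2 : Set.MapsTo (tlog p) {g : Module.End ℤ_[p] M | (g - 1) ^ (p - 1) = 0}
      {h : Module.End ℤ_[p] M | h ^ (p - 1) = 0} := fun y hy => tlog_mem hy
  exact ⟨tlog_texp hf', hinv.bijOn hmap1 hmap2, hinv.symm.bijOn hmap2 hmap1, hinv⟩
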